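/- For C > 1, let D_C be the set of functions ψ ∈ L¹([0,1]) for which there exists an interval I ⊂ [0,1] with |I| ≥ 1/C such that ψ = 0 outside I, ψ > 0 on I, |ψ(x) − ψ(y)| ≤ C ψ(x)|x−y| for all x, y ∈ I, and ∫₀¹ ψ = 1. Then D_C is a compact subset of L¹([0,1]). -/

import Mathlib

open MeasureTheory Set Filter
namespace Stmt8Aux

noncomputable section

abbrev I01 : Set ℝ := Icc (0:ℝ) 1

/-- the measure -/
abbrev μ01 : Measure ℝ := volume.restrict (Icc (0:ℝ) 1)

def mK (C : ℝ) : ℝ := (1+C)⁻¹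
def MK (C : ℝ) : ℝ := C*(1+C)

/-- family of admissible profiles -/
def SX (C : ℝ) : Set C(I01, ℝ) :=
  {g | (∀ x y : I01, |g x - g y| ≤ C * g x * |(x:ℝ) - (y:ℝ)|) ∧
       (∀ x : I01, g x ∈ Icc (mK C) (MK C))}

/-- admissible endpoint pairs -/
def TX (C : ℝ) : Set (ℝ × ℝ) := {q | 0 ≤ q.1 ∧ q.1 + 1/C ≤ q.2 ∧ q.2 ≤ 1}

def ffun (a b : ℝ) (g : C(I01, ℝ)) : ℝ → ℝ :=
  (Icc a b).indicator (fun x => g (projIcc (0:ℝ) 1 zero_le_one x))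

lemma ffun_aesm (a b : ℝ) (g : C(I01, ℝ)) : AEStronglyMeasurable (ffun a b g) μ01 :=
  ((g.continuous.comp continuous_projIcc).stronglyMeasurable.indicator
    measurableSet_Icc).aestronglyMeasurable

lemma ffun_bound (a b : ℝ) (g : C(I01, ℝ)) (x : ℝ) : ‖ffun a b g x‖ ≤ ‖g‖ := by
  refine (norm_indicator_le_norm_self _ x).trans ?_
  exact g.norm_coe_le_norm _

lemma memℒp_ffun (a b : ℝ) (g : C(I01, ℝ)) : MemLp (ffun a b g) 1 μ01 :=
  MemLp.of_bound (ffun_aesm a b g) ‖g‖ (Filter.Eventually.of_forall (ffun_bound a b g))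

def Phi (p : (ℝ × ℝ) × C(I01, ℝ)) : Lp ℝ 1 μ01 :=
  (memℒp_ffun p.1.1 p.1.2 p.2).toLp _


lemma continuous_Phi : Continuous Phi := by
  rw [continuous_iff_seqContinuous]
  intro p q hp
  -- notation
  obtain ⟨⟨a, b⟩, g⟩ := q
  have ha : Tendsto (fun n => (p n).1.1) atTop (nhds a) :=
    ((continuous_fst.comp continuous_fst).tendsto _).comp hp
  have hb : Tendsto (fun n => (p n).1.2) atTop (nhds b) :=
    ((continuous_snd.comp continuous_fst).tendsto _).comp hp
  have hg : Tendsto (fun n => (p n).2) atTop (nhds g) :=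
    (continuous_snd.tendsto _).comp hp
  rw [tendsto_iff_dist_tendsto_zero]
  have hdist : ∀ n, dist (Phi (p n)) (Phi ((a,b),g)) =
      ∫ x, ‖ffun (p n).1.1 (p n).1.2 (p n).2 x - ffun a b g x‖ ∂μ01 := by
    intro n
    rw [dist_eq_norm, Phi, Phi, ← MemLp.toLp_sub]
    rw [L1.norm_eq_integral_norm]
    refine integral_congr_ae ?_
    filter_upwards [MemLp.coeFn_toLp ((memℒp_ffun _ _ _).sub (memℒp_ffun a b g))] with x hx
    rw [hx, Pi.sub_apply]
  refine Tendsto.congr (fun n => (hdist n).symm) ?_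
  -- dominated convergence
  have hnorm : Tendsto (fun n => ‖(p n).2‖) atTop (nhds ‖g‖) := hg.norm
  have hbd : ∀ᶠ n in atTop, ∀ᵐ x ∂μ01,
      ‖‖ffun (p n).1.1 (p n).1.2 (p n).2 x - ffun a b g x‖‖ ≤ ‖g‖ + 1 + ‖g‖ := by
    filter_upwards [hnorm.eventually_le_const (lt_add_one ‖g‖)] with n hn
    refine Eventually.of_forall fun x => ?_
    rw [norm_norm]
    calc ‖ffun (p n).1.1 (p n).1.2 (p n).2 x - ffun a b g x‖
        ≤ ‖ffun (p n).1.1 (p n).1.2 (p n).2 x‖ + ‖ffun a b g x‖ := norm_sub_le _ _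
      _ ≤ ‖g‖ + 1 + ‖g‖ := by
          have h1 := (ffun_bound (p n).1.1 (p n).1.2 (p n).2 x).trans hn
          have h2 := ffun_bound a b g x
          linarith
  have hgz : ∀ z : I01, Tendsto (fun n => (p n).2 z) atTop (nhds (g z)) := by
    intro z
    refine tendsto_iff_dist_tendsto_zero.2 (squeeze_zero (fun n => dist_nonneg)
      (fun n => ContinuousMap.dist_apply_le_dist z) (tendsto_iff_dist_tendsto_zero.1 hg))
  have hae : ∀ᵐ x ∂μ01, Tendsto
      (fun n => ‖ffun (p n).1.1 (p n).1.2 (p n).2 x - ffun a b g x‖) atTop (nhds 0) := by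
    have hnull : μ01 ({a} ∪ {b}) = 0 := by
      refine le_antisymm ((Measure.restrict_apply_le _ _).trans ?_) zero_le
      rw [measure_union_null (by simp) (by simp)]
    have hmem : ({a} ∪ {b} : Set ℝ)ᶜ ∈ ae μ01 := compl_mem_ae_iff.2 hnull
    filter_upwards [hmem] with x hx
    simp only [mem_compl_iff, mem_union, mem_singleton_iff, not_or] at hx
    have hptw : Tendsto (fun n => ffun (p n).1.1 (p n).1.2 (p n).2 x) atTop
        (nhds (ffun a b g x)) := by
      rcases lt_trichotomy x a with hxa | hxa | hxa
      ·
        have hz : ffun a b g x = 0 := by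
          rw [ffun, indicator_of_notMem]; intro hm; exact absurd hm.1 (not_le.2 hxa)
        rw [hz]
        refine Tendsto.congr' ?_ tendsto_const_nhds
        filter_upwards [ha.eventually_const_lt hxa] with n hn
        rw [ffun, indicator_of_notMem]; intro hm; exact absurd hm.1 (not_le.2 hn)
      · exact absurd hxa hx.1
      · rcases lt_trichotomy x b with hxb | hxb | hxb
        · -- a < x < b
          have hm : x ∈ Icc a b := ⟨hxa.le, hxb.le⟩
          have hval : ffun a b g x = g (projIcc (0:ℝ) 1 zero_le_one x) := by
            rw [ffun, indicator_of_mem hm]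
          rw [hval]
          refine Tendsto.congr' ?_ (hgz (projIcc (0:ℝ) 1 zero_le_one x))
          filter_upwards [ha.eventually_lt_const hxa, hb.eventually_const_lt hxb] with n h1 h2
          rw [ffun, indicator_of_mem (mem_Icc.2 ⟨h1.le, h2.le⟩)]
        · exact absurd hxb hx.2
        · have hz : ffun a b g x = 0 := by
            rw [ffun, indicator_of_notMem]; intro hm; exact absurd hm.2 (not_le.2 hxb)
          rw [hz]
          refine Tendsto.congr' ?_ tendsto_const_nhds
          filter_upwards [hb.eventually_lt_const hxb] with n hn
          rw [ffun, indicator_of_notMem]; intro hm; exact absurd hm.2 (not_le.2 hn)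
    simpa using (hptw.sub (tendsto_const_nhds (x := ffun a b g x))).norm
  have := tendsto_integral_filter_of_dominated_convergence (μ := μ01)
    (bound := fun _ => ‖g‖ + 1 + ‖g‖) (f := fun _ => (0:ℝ))
    (Eventually.of_forall fun n =>
      (((ffun_aesm (p n).1.1 (p n).1.2 (p n).2).sub (ffun_aesm a b g)).norm))
    hbd (integrable_const _) (by simpa using hae)
  simpa using this

lemma isCompact_TX (C : ℝ) (hC : 1 < C) : IsCompact (TX C) := by
  have h0C : (0:ℝ) < 1/C := by positivity
  refine ((isCompact_Icc (a:=(0:ℝ)) (b:=1)).prod (isCompact_Icc (a:=(0:ℝ)) (b:=1))).of_isClosed_subset ?_ ?_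
  · have : TX C = {q : ℝ × ℝ | 0 ≤ q.1} ∩ ({q : ℝ × ℝ | q.1 + 1/C ≤ q.2} ∩ {q : ℝ × ℝ | q.2 ≤ 1}) := rfl
    rw [this]
    exact (isClosed_le continuous_const continuous_fst).inter
      ((isClosed_le (continuous_fst.add continuous_const) continuous_snd).inter
        (isClosed_le continuous_snd continuous_const))
  · rintro ⟨a, b⟩ ⟨h0, hab, hb1⟩
    have hab' : a ≤ b := le_trans (by linarith) hab
    exact ⟨⟨h0, hab'.trans hb1⟩, ⟨le_trans (by linarith) hab, hb1⟩⟩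

lemma MK_nonneg (C : ℝ) (hC : 1 < C) : 0 ≤ MK C := by
  have : (0:ℝ) < C := by linarith
  unfold MK; nlinarith

lemma lipschitz_of_SX {C : ℝ} (hC : 1 < C) {g : C(I01, ℝ)} (hg : g ∈ SX C)
    (x y : I01) : dist (g x) (g y) ≤ C * MK C * dist x y := by
  rw [Real.dist_eq, Subtype.dist_eq, Real.dist_eq]
  refine (hg.1 x y).trans ?_
  have h1 : g x ≤ MK C := (hg.2 x).2
  have h0 : (0:ℝ) < C := by linarith
  have ht := abs_nonneg ((x:ℝ) - (y:ℝ))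
  have := mul_le_mul_of_nonneg_right (mul_le_mul_of_nonneg_left h1 h0.le) ht
  linarith

lemma isCompact_SX (C : ℝ) (hC : 1 < C) : IsCompact (SX C) := by
  have h0 : (0:ℝ) < C := by linarith
  refine ArzelaAscoli.isCompact_of_equicontinuous _ ?_ ?_
  · -- pointwise compactness: the image is a closed subset of a product of compacts
    have himg : ContinuousMap.toFun '' SX C =
        {h : I01 → ℝ | (∀ x y : I01, |h x - h y| ≤ C * h x * |(x:ℝ) - (y:ℝ)|) ∧
          (∀ x : I01, h x ∈ Icc (mK C) (MK C))} := by
      ext h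
      constructor
      · rintro ⟨g, hg, rfl⟩; exact hg
      · rintro ⟨h1, h2⟩
        have hlip : LipschitzWith ⟨C * MK C, mul_nonneg h0.le (MK_nonneg C hC)⟩ h := by
          refine LipschitzWith.of_dist_le_mul fun x y => ?_
          rw [Real.dist_eq, Subtype.dist_eq, Real.dist_eq]; change _ ≤ C * MK C * _
          refine (h1 x y).trans ?_
          have ht := abs_nonneg ((x:ℝ) - (y:ℝ))
          have := mul_le_mul_of_nonneg_right (mul_le_mul_of_nonneg_left (h2 x).2 h0.le) ht
          linarith
        exact ⟨⟨h, hlip.continuous⟩, ⟨h1, h2⟩, rfl⟩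
    rw [himg]
    refine (isCompact_univ_pi fun _ : I01 => isCompact_Icc (a := mK C) (b := MK C)).of_isClosed_subset ?_ ?_
    · have heq : {h : I01 → ℝ | (∀ x y : I01, |h x - h y| ≤ C * h x * |(x:ℝ) - (y:ℝ)|) ∧
          (∀ x : I01, h x ∈ Icc (mK C) (MK C))} =
          (⋂ x : I01, ⋂ y : I01, {h : I01 → ℝ | |h x - h y| ≤ C * h x * |(x:ℝ) - (y:ℝ)|}) ∩
          (⋂ x : I01, (fun h : I01 → ℝ => h x) ⁻¹' Icc (mK C) (MK C)) := by
        ext h; simp only [mem_setOf_eq, mem_inter_iff, mem_iInter, mem_preimage]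
      rw [heq]
      refine IsClosed.inter ?_ ?_
      · refine isClosed_iInter fun x => isClosed_iInter fun y => ?_
        exact isClosed_le (((continuous_apply x).sub (continuous_apply y)).abs)
          ((continuous_const.mul (continuous_apply x)).mul continuous_const)
      · exact isClosed_iInter fun x => isClosed_Icc.preimage (continuous_apply x)
    · rintro h ⟨-, h2⟩ x -; exact h2 x
  · -- equicontinuity
    refine Metric.equicontinuous_of_continuity_modulus (fun t => C * MK C * t) ?_ _ ?_
    · have : Filter.Tendsto (fun t : ℝ => C * MK C * t) (nhds 0) (nhds (C * MK C * 0)) :=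
        (continuous_const.mul continuous_id).tendsto 0
      simpa using this
    · rintro x y ⟨g, hg⟩
      exact lipschitz_of_SX hC hg x y

section Main
variable {C : ℝ}

lemma clamp_mem {a b : ℝ} (hab : a ≤ b) (t : ℝ) : max a (min b t) ∈ Icc a b :=
  ⟨le_max_left _ _, max_le hab (min_le_left _ _)⟩

lemma clamp_lip {a b : ℝ} (s t : ℝ) : |max a (min b s) - max a (min b t)| ≤ |s - t| := by
  rw [max_comm a, max_comm a]
  refine (abs_max_sub_max_le_abs _ _ _).trans ?_
  refine (abs_min_sub_min_le_max b s b t).trans ?_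
  simp

lemma clamp_eq {a b t : ℝ} (ht : t ∈ Icc a b) : max a (min b t) = t := by
  rw [min_eq_right ht.2, max_eq_right ht.1]

lemma ffun_of_mem (a b : ℝ) (g : C(I01, ℝ)) {x : ℝ} (hx : x ∈ Icc a b) (hx01 : x ∈ I01) :
    ffun a b g x = g ⟨x, hx01⟩ := by
  rw [ffun, indicator_of_mem hx]
  congr 1
  exact projIcc_of_mem zero_le_one hx01

/-- Forward inclusion: every admissible density comes from a point in the compact family. -/
lemma mem_image_of_admissible (hC : 1 < C) {ψ : Lp ℝ 1 μ01} {f : ℝ → ℝ}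
    (hae : ⇑ψ =ᵐ[μ01] f) {a b : ℝ} (h0a : 0 ≤ a) (hab : a < b) (hb1 : b ≤ 1)
    (hlen : 1 / C ≤ b - a)
    (hout : ∀ x ∈ Icc (0:ℝ) 1 \ Icc a b, f x = 0)
    (hpos : ∀ x ∈ Icc a b, 0 < f x)
    (hlip : ∀ x ∈ Icc a b, ∀ y ∈ Icc a b, |f x - f y| ≤ C * f x * |x - y|)
    (hint : ∫ x in Icc (0:ℝ) 1, f x = 1) :
    ψ ∈ Phi '' (TX C ×ˢ SX C) ∧ ‖ψ‖ = 1 := by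
  have hC0 : (0:ℝ) < C := by linarith
  have h1C : (0:ℝ) < 1 + C := by linarith
  have hsub : Icc a b ⊆ Icc (0:ℝ) 1 := Icc_subset_Icc h0a hb1
  -- comparison of values
  have hcomp : ∀ x ∈ Icc a b, ∀ y ∈ Icc a b, f y ≤ (1 + C) * f x := by
    intro x hx y hy
    have hx1 := hsub hx; have hy1 := hsub hy
    have habs : |x - y| ≤ 1 := by
      rw [abs_sub_le_iff]; constructor <;>
        [linarith [hx1.2, hy1.1]; linarith [hy1.2, hx1.1]]
    have h1 := hlip x hx y hy
    have h2 : f y - f x ≤ |f x - f y| := by rw [abs_sub_comm]; exact le_abs_self _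
    have h3 : C * f x * |x - y| ≤ C * f x * 1 :=
      mul_le_mul_of_nonneg_left habs (mul_nonneg hC0.le (hpos x hx).le)
    nlinarith [hpos x hx]
  -- bounds
  have hintg : IntegrableOn f (Icc a b) := by
    refine ContinuousOn.integrableOn_Icc ?_
    have hB : 0 ≤ C * ((1 + C) * f a) :=
      mul_nonneg hC0.le (mul_nonneg h1C.le (hpos a ⟨le_refl a, hab.le⟩).le)
    refine LipschitzOnWith.continuousOn (K := ⟨C * ((1+C) * f a), hB⟩) ?_
    refine LipschitzOnWith.of_dist_le_mul fun x hx y hy => ?_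
    rw [Real.dist_eq, Real.dist_eq]; change _ ≤ C * ((1+C) * f a) * _
    refine (hlip x hx y hy).trans ?_
    have h1 : f x ≤ (1 + C) * f a := hcomp a ⟨le_refl a, hab.le⟩ x hx
    have h2 := mul_le_mul_of_nonneg_right
      (mul_le_mul_of_nonneg_left h1 hC0.le) (abs_nonneg (x - y))
    linarith
  have hvol : (volume (Icc a b)).toReal = b - a := by
    rw [Real.volume_Icc, ENNReal.toReal_ofReal (by linarith)]
  have hintab : ∫ x in Icc a b, f x = 1 := by
    rw [← hint]
    refine (setIntegral_eq_of_subset_of_ae_diff_eq_zero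
      measurableSet_Icc.nullMeasurableSet hsub ?_).symm
    exact Filter.Eventually.of_forall fun x hx => hout x hx
  have hbound : ∀ x ∈ Icc a b, f x ∈ Icc (mK C) (MK C) := by
    intro x hx
    have hfx := hpos x hx
    have hba1 : b - a ≤ 1 := by linarith [(hsub ⟨le_refl a, hab.le⟩).1, hb1]
    constructor
    · -- lower bound
      have hup : ∫ y in Icc a b, f y ≤ ∫ _ in Icc a b, (1 + C) * f x :=
        setIntegral_mono_on hintg (integrableOn_const (by
          rw [Real.volume_Icc]; exact ENNReal.ofReal_ne_top)) measurableSet_Icc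
          (fun y hy => hcomp x hx y hy)
      rw [setIntegral_const, measureReal_def, hvol, smul_eq_mul, hintab] at hup
      have h3 : (b - a) * ((1 + C) * f x) ≤ 1 * ((1 + C) * f x) :=
        mul_le_mul_of_nonneg_right hba1 (mul_nonneg h1C.le hfx.le)
      have h3' : 1 ≤ (1 + C) * f x := by linarith
      have h4 : (1 + C)⁻¹ * 1 ≤ (1 + C)⁻¹ * ((1 + C) * f x) :=
        mul_le_mul_of_nonneg_left h3' (inv_nonneg.2 h1C.le)
      rw [mul_one, ← mul_assoc, inv_mul_cancel₀ h1C.ne', one_mul] at h4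
      rw [mK]; exact h4
    · -- upper bound
      have hlow : ∫ _ in Icc a b, (1 + C)⁻¹ * f x ≤ ∫ y in Icc a b, f y := by
        refine setIntegral_mono_on (integrableOn_const (by
          rw [Real.volume_Icc]; exact ENNReal.ofReal_ne_top)) hintg measurableSet_Icc
          (fun y hy => ?_)
        have h7 := mul_le_mul_of_nonneg_left (hcomp y hy x hx) (inv_nonneg.2 h1C.le)
        rw [← mul_assoc, inv_mul_cancel₀ h1C.ne', one_mul] at h7
        exact h7
      rw [setIntegral_const, measureReal_def, hvol, smul_eq_mul, hintab] at hlow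
      have h1 : 1 / C * ((1 + C)⁻¹ * f x) ≤ (b - a) * ((1 + C)⁻¹ * f x) :=
        mul_le_mul_of_nonneg_right hlen (mul_nonneg (inv_nonneg.2 h1C.le) hfx.le)
      have h2 : 1 / C * ((1 + C)⁻¹ * f x) ≤ 1 := le_trans h1 hlow
      have h6 := mul_le_mul_of_nonneg_left h2 (mul_nonneg hC0.le h1C.le)
      have h8 : C * (1 + C) * (1 / C * ((1 + C)⁻¹ * f x)) = f x := by
        field_simp
      rw [h8, mul_one] at h6
      rw [MK]; exact h6
  -- the extended function
  set fc : ℝ → ℝ := fun t => f (max a (min b t)) with hfc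
  have hfc_mem : ∀ t, max a (min b t) ∈ Icc a b := clamp_mem hab.le
  have hfc_lip : ∀ s t, |fc s - fc t| ≤ C * fc s * |s - t| := by
    intro s t
    refine (hlip _ (hfc_mem s) _ (hfc_mem t)).trans ?_
    exact mul_le_mul_of_nonneg_left (clamp_lip s t)
      (mul_nonneg hC0.le (hpos _ (hfc_mem s)).le)
  have hfc_bnd : ∀ t, fc t ∈ Icc (mK C) (MK C) := fun t => hbound _ (hfc_mem t)
  have hfc_cont : Continuous fc := by
    have hB : 0 ≤ C * MK C := mul_nonneg hC0.le (MK_nonneg C hC)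
    refine LipschitzWith.continuous (K := ⟨C * MK C, hB⟩) ?_
    refine LipschitzWith.of_dist_le_mul fun s t => ?_
    rw [Real.dist_eq, Real.dist_eq]; change _ ≤ C * MK C * _
    refine (hfc_lip s t).trans ?_
    have h2 := mul_le_mul_of_nonneg_right
      (mul_le_mul_of_nonneg_left (hfc_bnd s).2 hC0.le) (abs_nonneg (s - t))
    linarith
  set g : C(I01, ℝ) := ⟨fun x => fc ↑x, hfc_cont.comp continuous_subtype_val⟩ with hg
  have hmem : ((a, b), g) ∈ TX C ×ˢ SX C := by
    refine ⟨⟨h0a, by linarith, hb1⟩, ?_, fun x => hfc_bnd ↑x⟩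
    intro x y
    refine (hfc_lip ↑x ↑y)
  have hcoe : ∀ x ∈ Icc (0:ℝ) 1, f x = ffun a b g x := by
    intro x hx01
    by_cases hx : x ∈ Icc a b
    · rw [ffun_of_mem a b g hx hx01]
      show f x = f (max a (min b x))
      rw [clamp_eq hx]
    · rw [ffun, indicator_of_notMem hx]
      exact hout x ⟨hx01, hx⟩
  have haef : f =ᵐ[μ01] ffun a b g := by
    filter_upwards [ae_restrict_mem measurableSet_Icc] with x hx
    exact hcoe x hx
  have hψ : ψ = Phi ((a, b), g) := by
    refine Lp.ext ?_
    exact hae.trans (haef.trans (MemLp.coeFn_toLp _).symm)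
  have hnonneg : ∀ x ∈ Icc (0:ℝ) 1, 0 ≤ f x := by
    intro x hx01
    by_cases hx : x ∈ Icc a b
    · exact (hpos x hx).le
    · rw [hout x ⟨hx01, hx⟩]
  refine ⟨⟨((a, b), g), hmem, hψ.symm⟩, ?_⟩
  rw [L1.norm_eq_integral_norm]
  have : ∫ x, ‖ψ x‖ ∂μ01 = ∫ x, ‖f x‖ ∂μ01 := by
    refine integral_congr_ae ?_
    filter_upwards [hae] with x hx
    rw [hx]
  rw [this]
  have : ∫ x, ‖f x‖ ∂μ01 = ∫ x in Icc (0:ℝ) 1, f x := by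
    refine setIntegral_congr_fun measurableSet_Icc fun x hx => ?_
    exact Real.norm_of_nonneg (hnonneg x hx)
  rw [this, hint]

/-- Reverse inclusion. -/
lemma admissible_of_mem_image (hC : 1 < C) {p : (ℝ × ℝ) × C(I01, ℝ)} (hp : p ∈ TX C ×ˢ SX C)
    (hnorm : ‖Phi p‖ = 1) :
    ∃ f : ℝ → ℝ,
      (⇑(Phi p) =ᵐ[μ01] f) ∧
      ∃ a b : ℝ, 0 ≤ a ∧ a < b ∧ b ≤ 1 ∧ 1 / C ≤ b - a ∧
        (∀ x ∈ Icc (0:ℝ) 1 \ Icc a b, f x = 0) ∧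
        (∀ x ∈ Icc a b, 0 < f x) ∧
        (∀ x ∈ Icc a b, ∀ y ∈ Icc a b, |f x - f y| ≤ C * f x * |x - y|) ∧
        (∫ x in Icc (0:ℝ) 1, f x = 1) := by
  obtain ⟨⟨a, b⟩, g⟩ := p
  obtain ⟨⟨h0a, habC, hb1⟩, hgl, hgb⟩ := hp
  have hC0 : (0:ℝ) < C := by linarith
  have h1C : (0:ℝ) < 1 + C := by linarith
  have hmKpos : 0 < mK C := by rw [mK]; positivity
  have hab : a < b := by
    have : 0 < 1 / C := by positivity
    linarith
  have hsub : Icc a b ⊆ Icc (0:ℝ) 1 := Icc_subset_Icc h0a hb1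
  refine ⟨ffun a b g, MemLp.coeFn_toLp _, a, b, h0a, hab, hb1, by linarith, ?_, ?_, ?_, ?_⟩
  · intro x hx
    exact indicator_of_notMem hx.2 _
  · intro x hx
    rw [ffun_of_mem a b g hx (hsub hx)]
    exact lt_of_lt_of_le hmKpos (hgb _).1
  · intro x hx y hy
    have hx01 := hsub hx; have hy01 := hsub hy
    rw [ffun_of_mem a b g hx hx01, ffun_of_mem a b g hy hy01]
    simpa using hgl ⟨x, hx01⟩ ⟨y, hy01⟩
  · rw [L1.norm_eq_integral_norm] at hnorm
    refine Eq.trans ?_ hnorm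
    have hcoe : ⇑(Phi ((a,b),g)) =ᵐ[μ01] ffun a b g := MemLp.coeFn_toLp (memℒp_ffun a b g)
    refine integral_congr_ae ?_
    filter_upwards [hcoe, ae_restrict_mem measurableSet_Icc] with x hx hx01
    rw [hx]
    refine (Real.norm_of_nonneg ?_).symm
    by_cases hxab : x ∈ Icc a b
    · rw [ffun_of_mem a b g hxab hx01]
      exact le_trans hmKpos.le (hgb _).1
    · rw [ffun, indicator_of_notMem hxab]

end Main

end
end Stmt8Aux

open Stmt8Aux in
/-- Lemma 3.6: the family of normalized, multiplicatively Lipschitz densities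
supported on an interval of definite length is compact in L¹([0,1]). -/
theorem stmt_8 (C : ℝ) (hC : 1 < C) :
    IsCompact {ψ : Lp ℝ 1 (volume.restrict (Icc (0:ℝ) 1)) |
      ∃ f : ℝ → ℝ,
        (⇑ψ =ᵐ[volume.restrict (Icc (0:ℝ) 1)] f) ∧
        ∃ a b : ℝ, 0 ≤ a ∧ a < b ∧ b ≤ 1 ∧ 1 / C ≤ b - a ∧
          (∀ x ∈ Icc (0:ℝ) 1 \ Icc a b, f x = 0) ∧
          (∀ x ∈ Icc a b, 0 < f x) ∧
          (∀ x ∈ Icc a b, ∀ y ∈ Icc a b, |f x - f y| ≤ C * f x * |x - y|) ∧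
          (∫ x in Icc (0:ℝ) 1, f x = 1)} := by
  have hset : {ψ : Lp ℝ 1 μ01 |
      ∃ f : ℝ → ℝ,
        (⇑ψ =ᵐ[μ01] f) ∧
        ∃ a b : ℝ, 0 ≤ a ∧ a < b ∧ b ≤ 1 ∧ 1 / C ≤ b - a ∧
          (∀ x ∈ Icc (0:ℝ) 1 \ Icc a b, f x = 0) ∧
          (∀ x ∈ Icc a b, 0 < f x) ∧
          (∀ x ∈ Icc a b, ∀ y ∈ Icc a b, |f x - f y| ≤ C * f x * |x - y|) ∧
          (∫ x in Icc (0:ℝ) 1, f x = 1)} =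
      (Phi '' (TX C ×ˢ SX C)) ∩ {ψ | ‖ψ‖ = 1} := by
    ext ψ
    constructor
    · rintro ⟨f, hae, a, b, h0a, hab, hb1, hlen, hout, hpos, hlip, hint⟩
      exact mem_image_of_admissible hC hae h0a hab hb1 hlen hout hpos hlip hint
    · rintro ⟨⟨p, hp, rfl⟩, hnorm⟩
      exact admissible_of_mem_image hC hp hnorm
  rw [hset]
  refine IsCompact.inter_right ?_ (isClosed_eq continuous_norm continuous_const)
  exact ((isCompact_TX C hC).prod (isCompact_SX C hC)).image continuous_Phi
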